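/- Let P be a dynamic path instance with n ≥ 1 and let k ≥ 2 be an integer. Assume that strictly more than k vertices of P carry positive weight. Then the set S = { i : 0 ≤ i < n and Θ¹(P_{0,i}) < Θ^{k−1}(P_{i+1,n}) } is nonempty (in particular 0 ∈ S); let t = max S, so 0 ≤ t < n. Then Θᵏ(P_{0,n}) = min( Θ¹(P_{0,t+1}), Θ^{k−1}(P_{t+1,n}) ). -/

import Mathlib

/-- A dynamic path instance: `n+1` vertices at strictly increasing coordinates
`x 0 < x 1 < ⋯ < x n`, natural-number weights `w i`, positive integer capacities
`c j` (capacity of the edge from `x (j-1)` to `x j`, for `1 ≤ j ≤ n`), and a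
positive travel time `τ` per unit distance. -/
structure DPath where
  n : ℕ
  x : ℕ → ℝ
  w : ℕ → ℕ
  c : ℕ → ℕ
  τ : ℝ
  hx : ∀ i, i < n → x i < x (i + 1)
  hc : ∀ j, 1 ≤ j → j ≤ n → 0 < c j
  hτ : 0 < τ

/-- `P.W a i = w_a + ⋯ + w_i`. -/
def DPath.W (P : DPath) (a i : ℕ) : ℕ := ∑ j ∈ Finset.Icc a i, P.w j

/-- For a sink at `y` in subpath `P_{a,b}`: the minimum capacity
`min_{i+1 ≤ j ≤ k+1} c_j`, where `k` is the index with `x_k < y ≤ x_{k+1}`;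
the edges `j` with `i+1 ≤ j ≤ k+1` are exactly those with `i+1 ≤ j ≤ b` and
`x (j-1) < y`. -/
noncomputable def DPath.cL (P : DPath) (b : ℕ) (y : ℝ) (i : ℕ) : ℕ :=
  sInf (P.c '' {j | i + 1 ≤ j ∧ j ≤ b ∧ P.x (j - 1) < y})

/-- For a sink at `y` in subpath `P_{a,b}`: the minimum capacity
`min_{k+1 ≤ j ≤ i} c_j`, where `k` is the index with `x_k ≤ y < x_{k+1}`;
the edges `j` with `k+1 ≤ j ≤ i` are exactly those with `a+1 ≤ j ≤ i` and
`y < x j`. -/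
noncomputable def DPath.cR (P : DPath) (a : ℕ) (y : ℝ) (i : ℕ) : ℕ :=
  sInf (P.c '' {j | a + 1 ≤ j ∧ j ≤ i ∧ y < P.x j})

/-- Left evacuation time `Θ_L(P_{a,b}, y)`: the maximum, over indices `i` with
`a ≤ i ≤ b`, `x i < y` and `W_{a,i} ≥ 1`, of
`(y − x_i)·τ + ⌈W_{a,i} / min_{i+1 ≤ j ≤ k+1} c_j⌉ − 1`; it is `0` if no such
index exists. -/
noncomputable def ThetaL (P : DPath) (a b : ℕ) (y : ℝ) : ℝ :=
  sSup (insert 0 {t : ℝ | ∃ i, a ≤ i ∧ i ≤ b ∧ P.x i < y ∧ 1 ≤ P.W a i ∧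
    t = (y - P.x i) * P.τ + (⌈(P.W a i : ℝ) / (P.cL b y i : ℝ)⌉ : ℝ) - 1})

/-- Right evacuation time `Θ_R(P_{a,b}, y)`. -/
noncomputable def ThetaR (P : DPath) (a b : ℕ) (y : ℝ) : ℝ :=
  sSup (insert 0 {t : ℝ | ∃ i, a ≤ i ∧ i ≤ b ∧ y < P.x i ∧ 1 ≤ P.W i b ∧
    t = (P.x i - y) * P.τ + (⌈(P.W i b : ℝ) / (P.cR a y i : ℝ)⌉ : ℝ) - 1})

/-- Evacuation time of subpath `P_{a,b}` to sink `y`. -/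
noncomputable def Theta (P : DPath) (a b : ℕ) (y : ℝ) : ℝ :=
  max (ThetaL P a b y) (ThetaR P a b y)

/-- `Θ¹(P_{a,b})`: minimum 1-sink evacuation time of subpath `P_{a,b}`
over sinks `y ∈ [x_a, x_b]`. -/
noncomputable def Theta1 (P : DPath) (a b : ℕ) : ℝ :=
  sInf (Theta P a b '' Set.Icc (P.x a) (P.x b))

/-- `Θᵏ(P_{a,b})`: minimum over all partitions of `{a, …, b}` into at most `k`
nonempty intervals `[f j, f (j+1) - 1]`, of the maximum over the intervals of
`Θ¹`. -/
noncomputable def ThetaK (P : DPath) (k a b : ℕ) : ℝ :=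
  sInf {t : ℝ | ∃ (m : ℕ) (f : ℕ → ℕ), 1 ≤ m ∧ m ≤ k ∧
    f 0 = a ∧ f m = b + 1 ∧ (∀ j, j < m → f j < f (j + 1)) ∧
    t = ⨆ j : Fin m, Theta1 P (f j.val) (f (j.val + 1) - 1)}


section Lemmas

open Finset in
private lemma card_aux (P : DPath) (k : ℕ) (hw : k < ((Finset.range (P.n + 1)).filter (fun i => 1 ≤ P.w i)).card) :
    k ≤ ((Finset.Icc 1 P.n).filter (fun i => 1 ≤ P.w i)).card := by
  have hsub : (Finset.range (P.n + 1)).filter (fun i => 1 ≤ P.w i) ⊆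
      insert 0 ((Finset.Icc 1 P.n).filter (fun i => 1 ≤ P.w i)) := by
    intro i hi
    simp only [Finset.mem_filter, Finset.mem_range] at hi
    rcases Nat.eq_zero_or_pos i with rfl | hpos
    · exact Finset.mem_insert_self _ _
    · exact Finset.mem_insert_of_mem (by simp only [Finset.mem_filter, Finset.mem_Icc]; omega)
  have := (Finset.card_le_card hsub).trans (Finset.card_insert_le _ _)
  omega

namespace DPath

variable (P : DPath)

lemma x_mono {i j : ℕ} (hij : i ≤ j) (hj : j ≤ P.n) : P.x i ≤ P.x j := by
  induction j, hij using Nat.le_induction with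
  | base => exact le_rfl
  | succ n hn ih => exact (ih (by omega)).trans (le_of_lt (P.hx n (by omega)))

lemma x_strictMono {i j : ℕ} (hij : i < j) (hj : j ≤ P.n) : P.x i < P.x j := by
  have h1 : P.x i < P.x (i+1) := P.hx i (by omega)
  exact h1.trans_le (P.x_mono hij hj)

lemma W_mono_left {a a' i : ℕ} (h : a ≤ a') : P.W a' i ≤ P.W a i :=
  Finset.sum_le_sum_of_subset (Finset.Icc_subset_Icc h le_rfl)

lemma W_mono_right {a i i' : ℕ} (h : i ≤ i') : P.W a i ≤ P.W a i' :=
  Finset.sum_le_sum_of_subset (Finset.Icc_subset_Icc le_rfl h)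

lemma w_le_W {a p i : ℕ} (ha : a ≤ p) (hp : p ≤ i) : P.w p ≤ P.W a i :=
  Finset.single_le_sum (fun j _ => Nat.zero_le _) (Finset.mem_Icc.mpr ⟨ha, hp⟩)

lemma cInf_cases {S S' : Set ℕ} (hsub : S ⊆ S') (hS' : ∀ j ∈ S', 1 ≤ j ∧ j ≤ P.n) :
    sInf (P.c '' S) = 0 ∨ (1 ≤ sInf (P.c '' S') ∧ sInf (P.c '' S') ≤ sInf (P.c '' S)) := by
  rcases S.eq_empty_or_nonempty with rfl | hS
  · left; simp
  · right
    have h1 : (P.c '' S).Nonempty := hS.image _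
    have h2 : (P.c '' S').Nonempty := (hS.mono hsub).image _
    constructor
    · obtain ⟨j, hj, he⟩ := Nat.sInf_mem h2
      rw [← he]
      exact P.hc j (hS' j hj).1 (hS' j hj).2
    · exact Nat.sInf_le (Set.image_mono hsub (Nat.sInf_mem h1))

lemma cL_cases {b' b : ℕ} {y' y : ℝ} (i : ℕ) (hb' : b' ≤ b) (hb : b ≤ P.n) (hy : y' ≤ y) :
    P.cL b' y' i = 0 ∨ (1 ≤ P.cL b y i ∧ P.cL b y i ≤ P.cL b' y' i) := by
  apply P.cInf_cases
  · rintro j ⟨h1, h2, h3⟩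
    exact ⟨h1, h2.trans hb', h3.trans_le hy⟩
  · rintro j ⟨h1, h2, h3⟩
    exact ⟨by omega, h2.trans hb⟩

lemma cR_cases {a a' : ℕ} {y y' : ℝ} (i : ℕ) (ha : a ≤ a') (hi : i ≤ P.n) (hy : y ≤ y') :
    P.cR a' y' i = 0 ∨ (1 ≤ P.cR a y i ∧ P.cR a y i ≤ P.cR a' y' i) := by
  apply P.cInf_cases
  · rintro j ⟨h1, h2, h3⟩
    exact ⟨by omega, h2, hy.trans_lt h3⟩
  · rintro j ⟨h1, h2, h3⟩
    exact ⟨by omega, h2.trans hi⟩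

lemma cInf_pos {S : Set ℕ} (hS : ∀ j ∈ S, 1 ≤ j ∧ j ≤ P.n) (hne : S.Nonempty) :
    1 ≤ sInf (P.c '' S) := by
  obtain ⟨j, hj, he⟩ := Nat.sInf_mem (hne.image P.c)
  rw [← he]
  exact P.hc j (hS j hj).1 (hS j hj).2

lemma cL_pos {b : ℕ} {y : ℝ} (i : ℕ) (hb : b ≤ P.n)
    (hne : {j | i + 1 ≤ j ∧ j ≤ b ∧ P.x (j - 1) < y}.Nonempty) : 1 ≤ P.cL b y i :=
  P.cInf_pos (fun j hj => ⟨le_trans (Nat.le_add_left 1 i) hj.1, hj.2.1.trans hb⟩) hne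

lemma cR_pos {a : ℕ} {y : ℝ} (i : ℕ) (hi : i ≤ P.n)
    (hne : {j | a + 1 ≤ j ∧ j ≤ i ∧ y < P.x j}.Nonempty) : 1 ≤ P.cR a y i :=
  P.cInf_pos (fun j hj => ⟨le_trans (Nat.le_add_left 1 a) hj.1, hj.2.1.trans hi⟩) hne

end DPath

private lemma ceil_nonneg' (W c : ℕ) : (0:ℝ) ≤ (⌈(W : ℝ) / (c : ℝ)⌉ : ℝ) := by
  have : (0:ℝ) ≤ (W : ℝ) / (c : ℝ) := by positivity
  exact_mod_cast Int.ceil_nonneg this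

private lemma one_le_ceil' {W c : ℕ} (hW : 1 ≤ W) (hc : 1 ≤ c) :
    (1:ℝ) ≤ (⌈(W : ℝ) / (c : ℝ)⌉ : ℝ) := by
  have : (0:ℝ) < (W : ℝ) / (c : ℝ) :=
    div_pos (by exact_mod_cast hW) (by exact_mod_cast hc)
  exact_mod_cast Int.ceil_pos.mpr this

private lemma ceil_mono' {Ws cs Wb cb : ℕ} (hW : Ws ≤ Wb)
    (h : cs = 0 ∨ (1 ≤ cb ∧ cb ≤ cs)) :
    (⌈(Ws : ℝ) / (cs : ℝ)⌉ : ℝ) ≤ (⌈(Wb : ℝ) / (cb : ℝ)⌉ : ℝ) := by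
  rcases h with rfl | ⟨h1, h2⟩
  · simpa using ceil_nonneg' Wb cb
  · have : (Ws : ℝ) / (cs : ℝ) ≤ (Wb : ℝ) / (cb : ℝ) :=
      div_le_div₀ (by positivity) (by exact_mod_cast hW) (by exact_mod_cast h1)
        (by exact_mod_cast h2)
    exact_mod_cast Int.ceil_le_ceil this

lemma ThetaL_bddAbove (P : DPath) (a b : ℕ) (y : ℝ) :
    BddAbove (insert (0:ℝ) {t : ℝ | ∃ i, a ≤ i ∧ i ≤ b ∧ P.x i < y ∧ 1 ≤ P.W a i ∧
      t = (y - P.x i) * P.τ + (⌈(P.W a i : ℝ) / (P.cL b y i : ℝ)⌉ : ℝ) - 1}) := by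
  apply Set.Finite.bddAbove
  apply Set.Finite.insert
  apply Set.Finite.subset ((Set.finite_Icc a b).image
    (fun i => (y - P.x i) * P.τ + (⌈(P.W a i : ℝ) / (P.cL b y i : ℝ)⌉ : ℝ) - 1))
  rintro t ⟨i, h1, h2, -, -, rfl⟩
  exact ⟨i, Set.mem_Icc.mpr ⟨h1, h2⟩, rfl⟩

lemma ThetaR_bddAbove (P : DPath) (a b : ℕ) (y : ℝ) :
    BddAbove (insert (0:ℝ) {t : ℝ | ∃ i, a ≤ i ∧ i ≤ b ∧ y < P.x i ∧ 1 ≤ P.W i b ∧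
      t = (P.x i - y) * P.τ + (⌈(P.W i b : ℝ) / (P.cR a y i : ℝ)⌉ : ℝ) - 1}) := by
  apply Set.Finite.bddAbove
  apply Set.Finite.insert
  apply Set.Finite.subset ((Set.finite_Icc a b).image
    (fun i => (P.x i - y) * P.τ + (⌈(P.W i b : ℝ) / (P.cR a y i : ℝ)⌉ : ℝ) - 1))
  rintro t ⟨i, h1, h2, -, -, rfl⟩
  exact ⟨i, Set.mem_Icc.mpr ⟨h1, h2⟩, rfl⟩

lemma ThetaL_nonneg (P : DPath) (a b : ℕ) (y : ℝ) : 0 ≤ ThetaL P a b y :=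
  le_csSup (ThetaL_bddAbove P a b y) (Set.mem_insert _ _)

lemma ThetaR_nonneg (P : DPath) (a b : ℕ) (y : ℝ) : 0 ≤ ThetaR P a b y :=
  le_csSup (ThetaR_bddAbove P a b y) (Set.mem_insert _ _)

lemma Theta_nonneg (P : DPath) (a b : ℕ) (y : ℝ) : 0 ≤ Theta P a b y :=
  (ThetaL_nonneg P a b y).trans (le_max_left _ _)

lemma le_ThetaL (P : DPath) {a b i : ℕ} {y : ℝ} (h1 : a ≤ i) (h2 : i ≤ b)
    (h3 : P.x i < y) (h4 : 1 ≤ P.W a i) :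
    (y - P.x i) * P.τ + (⌈(P.W a i : ℝ) / (P.cL b y i : ℝ)⌉ : ℝ) - 1 ≤ ThetaL P a b y :=
  le_csSup (ThetaL_bddAbove P a b y)
    (Set.mem_insert_iff.mpr (Or.inr ⟨i, h1, h2, h3, h4, rfl⟩))

lemma le_ThetaR (P : DPath) {a b i : ℕ} {y : ℝ} (h1 : a ≤ i) (h2 : i ≤ b)
    (h3 : y < P.x i) (h4 : 1 ≤ P.W i b) :
    (P.x i - y) * P.τ + (⌈(P.W i b : ℝ) / (P.cR a y i : ℝ)⌉ : ℝ) - 1 ≤ ThetaR P a b y :=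
  le_csSup (ThetaR_bddAbove P a b y)
    (Set.mem_insert_iff.mpr (Or.inr ⟨i, h1, h2, h3, h4, rfl⟩))

lemma ThetaL_le (P : DPath) {a b : ℕ} {y z : ℝ} (h0 : 0 ≤ z)
    (h : ∀ i, a ≤ i → i ≤ b → P.x i < y → 1 ≤ P.W a i →
      (y - P.x i) * P.τ + (⌈(P.W a i : ℝ) / (P.cL b y i : ℝ)⌉ : ℝ) - 1 ≤ z) :
    ThetaL P a b y ≤ z := by
  apply csSup_le ⟨0, Set.mem_insert _ _⟩
  rintro t (rfl | ⟨i, h1, h2, h3, h4, rfl⟩)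
  · exact h0
  · exact h i h1 h2 h3 h4

lemma ThetaR_le (P : DPath) {a b : ℕ} {y z : ℝ} (h0 : 0 ≤ z)
    (h : ∀ i, a ≤ i → i ≤ b → y < P.x i → 1 ≤ P.W i b →
      (P.x i - y) * P.τ + (⌈(P.W i b : ℝ) / (P.cR a y i : ℝ)⌉ : ℝ) - 1 ≤ z) :
    ThetaR P a b y ≤ z := by
  apply csSup_le ⟨0, Set.mem_insert _ _⟩
  rintro t (rfl | ⟨i, h1, h2, h3, h4, rfl⟩)
  · exact h0
  · exact h i h1 h2 h3 h4

lemma ThetaL_mono (P : DPath) {a a' b' b : ℕ} {y' y : ℝ} (ha : a ≤ a') (hb' : b' ≤ b)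
    (hb : b ≤ P.n) (hy : y' ≤ y) : ThetaL P a' b' y' ≤ ThetaL P a b y := by
  apply ThetaL_le P (ThetaL_nonneg P a b y)
  intro i h1 h2 h3 h4
  refine le_trans ?_ (le_ThetaL P (ha.trans h1) (h2.trans hb') (h3.trans_le hy)
    (h4.trans (P.W_mono_left ha)))
  have hceil := ceil_mono' (P.W_mono_left ha (i := i)) (P.cL_cases i hb' hb hy)
  have hd : (y' - P.x i) * P.τ ≤ (y - P.x i) * P.τ :=
    mul_le_mul_of_nonneg_right (by linarith) P.hτ.le
  linarith

lemma ThetaR_mono (P : DPath) {a a' b' b : ℕ} {y' y : ℝ} (ha : a ≤ a') (hb' : b' ≤ b)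
    (hb : b ≤ P.n) (hy : y ≤ y') : ThetaR P a' b' y' ≤ ThetaR P a b y := by
  apply ThetaR_le P (ThetaR_nonneg P a b y)
  intro i h1 h2 h3 h4
  refine le_trans ?_ (le_ThetaR P (ha.trans h1) (h2.trans hb') (hy.trans_lt h3)
    (h4.trans (P.W_mono_right hb')))
  have hceil := ceil_mono' (P.W_mono_right hb' (a := i)) (P.cR_cases i ha ((h2.trans hb').trans hb) hy)
  have hd : (P.x i - y') * P.τ ≤ (P.x i - y) * P.τ :=
    mul_le_mul_of_nonneg_right (by linarith) P.hτ.le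
  linarith

lemma ThetaL_eq_zero (P : DPath) {a b : ℕ} {y : ℝ} (hb : b ≤ P.n) (hy : y ≤ P.x a) :
    ThetaL P a b y = 0 := by
  refine le_antisymm (ThetaL_le P le_rfl ?_) (ThetaL_nonneg P a b y)
  intro i h1 h2 h3 h4
  exact absurd ((h3.trans_le hy).trans_le (P.x_mono h1 (h2.trans hb))) (lt_irrefl _)

lemma ThetaR_eq_zero (P : DPath) {a b : ℕ} {y : ℝ} (hb : b ≤ P.n) (hy : P.x b ≤ y) :
    ThetaR P a b y = 0 := by
  refine le_antisymm (ThetaR_le P le_rfl ?_) (ThetaR_nonneg P a b y)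
  intro i h1 h2 h3 h4
  exact absurd h3 (not_lt.mpr ((P.x_mono h2 hb).trans hy))

lemma Theta1_le (P : DPath) {a b : ℕ} {y : ℝ} (hy : y ∈ Set.Icc (P.x a) (P.x b)) :
    Theta1 P a b ≤ Theta P a b y :=
  csInf_le ⟨0, by rintro t ⟨y', -, rfl⟩; exact Theta_nonneg P a b y'⟩ ⟨y, hy, rfl⟩

lemma le_Theta1 (P : DPath) {a b : ℕ} {z : ℝ} (hab : a ≤ b) (hb : b ≤ P.n)
    (h : ∀ y ∈ Set.Icc (P.x a) (P.x b), z ≤ Theta P a b y) : z ≤ Theta1 P a b := by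
  have hne : (Theta P a b '' Set.Icc (P.x a) (P.x b)).Nonempty :=
    ⟨Theta P a b (P.x a), ⟨P.x a, ⟨le_rfl, P.x_mono hab hb⟩, rfl⟩⟩
  apply le_csInf hne
  rintro t ⟨y, hy, rfl⟩; exact h y hy

lemma Theta1_nonneg (P : DPath) {a b : ℕ} (hab : a ≤ b) (hb : b ≤ P.n) :
    0 ≤ Theta1 P a b :=
  le_Theta1 P hab hb (fun y _ => Theta_nonneg P a b y)

lemma Theta1_mono (P : DPath) {a a' b' b : ℕ} (ha : a ≤ a') (hab' : a' ≤ b')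
    (hb' : b' ≤ b) (hb : b ≤ P.n) : Theta1 P a' b' ≤ Theta1 P a b := by
  have hab : a ≤ b := ha.trans (hab'.trans hb')
  have hne : (Theta P a b '' Set.Icc (P.x a) (P.x b)).Nonempty :=
    ⟨Theta P a b (P.x a), ⟨P.x a, ⟨le_rfl, P.x_mono hab hb⟩, rfl⟩⟩
  apply le_csInf hne
  rintro v ⟨y, ⟨hy1, hy2⟩, rfl⟩
  by_cases hc1 : y < P.x a'
  · refine (Theta1_le P ⟨le_rfl, P.x_mono hab' (hb'.trans hb)⟩).trans ?_
    apply max_le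
    · rw [ThetaL_eq_zero P (hb'.trans hb) le_rfl]; exact Theta_nonneg P a b y
    · exact (ThetaR_mono P ha hb' hb hc1.le).trans (le_max_right _ _)
  by_cases hc2 : P.x b' < y
  · refine (Theta1_le P ⟨P.x_mono hab' (hb'.trans hb), le_rfl⟩).trans ?_
    apply max_le
    · exact (ThetaL_mono P ha hb' hb hc2.le).trans (le_max_left _ _)
    · rw [ThetaR_eq_zero P (hb'.trans hb) le_rfl]; exact Theta_nonneg P a b y
  · refine (Theta1_le P ⟨not_lt.mp hc1, not_lt.mp hc2⟩).trans ?_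
    exact max_le ((ThetaL_mono P ha hb' hb le_rfl).trans (le_max_left _ _))
      ((ThetaR_mono P ha hb' hb le_rfl).trans (le_max_right _ _))

/-- The set of values of partitions of `{a,…,b}` into at most `k` intervals. -/
def PartVals (P : DPath) (k a b : ℕ) : Set ℝ :=
  {t : ℝ | ∃ (m : ℕ) (f : ℕ → ℕ), 1 ≤ m ∧ m ≤ k ∧
    f 0 = a ∧ f m = b + 1 ∧ (∀ j, j < m → f j < f (j + 1)) ∧
    t = ⨆ j : Fin m, Theta1 P (f j.val) (f (j.val + 1) - 1)}

lemma ThetaK_def (P : DPath) (k a b : ℕ) : ThetaK P k a b = sInf (PartVals P k a b) := rfl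

lemma mono_aux {f : ℕ → ℕ} {m : ℕ} (h : ∀ j, j < m → f j < f (j + 1)) :
    ∀ {i j : ℕ}, i ≤ j → j ≤ m → f i ≤ f j := by
  intro i j hij hj
  induction j, hij using Nat.le_induction with
  | base => exact le_rfl
  | succ p hp ih => exact (ih (by omega)).trans (le_of_lt (h p (by omega)))

lemma term_nonneg (P : DPath) {f : ℕ → ℕ} {m b : ℕ} (hb : b ≤ P.n) (hfm : f m = b + 1)
    (hstep : ∀ j, j < m → f j < f (j + 1)) {j : ℕ} (hj : j < m) :
    0 ≤ Theta1 P (f j) (f (j + 1) - 1) := by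
  have h1 : f j < f (j + 1) := hstep j hj
  have h2 : f (j + 1) ≤ b + 1 := hfm ▸ mono_aux hstep (by omega) le_rfl
  exact Theta1_nonneg P (by omega) (by omega)

lemma PSet_nonneg (P : DPath) {k a b : ℕ} (hb : b ≤ P.n) : ∀ t ∈ PartVals P k a b, 0 ≤ t := by
  rintro t ⟨m, f, hm, hmk, hf0, hfm, hstep, rfl⟩
  refine le_trans (term_nonneg P hb hfm hstep (j := 0) hm) ?_
  exact le_ciSup (f := fun j : Fin m => Theta1 P (f j.val) (f (j.val + 1) - 1))
    (Set.finite_range _).bddAbove (⟨0, hm⟩ : Fin m)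

lemma PSet_bddBelow (P : DPath) {k a b : ℕ} (hb : b ≤ P.n) : BddBelow (PartVals P k a b) :=
  ⟨0, fun t ht => PSet_nonneg P hb t ht⟩

lemma Theta1_mem_PSet (P : DPath) {k a b : ℕ} (hk : 1 ≤ k) (hab : a ≤ b) :
    Theta1 P a b ∈ PartVals P k a b := by
  refine ⟨1, fun j => if j = 0 then a else b + 1, le_rfl, hk, if_pos rfl,
    if_neg one_ne_zero, ?_, ?_⟩
  · intro j hj
    have hj0 : j = 0 := by omega
    subst hj0
    show (if (0:ℕ) = 0 then a else b + 1) < (if (0+1:ℕ) = 0 then a else b + 1)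
    norm_num
    omega
  · rw [ciSup_unique]
    have hd : (default : Fin 1).val = 0 := rfl
    rw [hd]
    norm_num

lemma ThetaK_le_of_mem (P : DPath) {k a b : ℕ} {V : ℝ} (hb : b ≤ P.n)
    (hV : V ∈ PartVals P k a b) : ThetaK P k a b ≤ V := by
  rw [ThetaK_def]; exact csInf_le (PSet_bddBelow P hb) hV

lemma le_ThetaK (P : DPath) {k a b : ℕ} {z : ℝ} (hk : 1 ≤ k) (hab : a ≤ b)
    (h : ∀ V ∈ PartVals P k a b, z ≤ V) : z ≤ ThetaK P k a b := by
  rw [ThetaK_def]; exact le_csInf ⟨_, Theta1_mem_PSet P hk hab⟩ h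

lemma ThetaK_le_Theta1 (P : DPath) {k a b : ℕ} (hk : 1 ≤ k) (hab : a ≤ b) (hb : b ≤ P.n) :
    ThetaK P k a b ≤ Theta1 P a b := ThetaK_le_of_mem P hb (Theta1_mem_PSet P hk hab)

lemma ThetaK_mono_left (P : DPath) {k a a' b : ℕ} (hk : 1 ≤ k) (ha : a ≤ a') (ha'b : a' ≤ b)
    (hb : b ≤ P.n) : ThetaK P k a' b ≤ ThetaK P k a b := by
  rw [ThetaK_def P k a b]
  apply le_csInf ⟨_, Theta1_mem_PSet P hk (ha.trans ha'b)⟩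
  rintro V ⟨m, f, hm, hmk, hf0, hfm, hstep, rfl⟩
  haveI : Nonempty (Fin m) := ⟨⟨0, hm⟩⟩
  set j0 := Nat.findGreatest (fun j => f j ≤ a') m with hj0def
  have hj0le : f j0 ≤ a' := by
    have h := @Nat.findGreatest_spec 0 (fun j => f j ≤ a') inferInstance m (Nat.zero_le m)
      (by show f 0 ≤ a'; rw [hf0]; exact ha)
    rw [← hj0def] at h
    exact h
  have hj0m : j0 ≤ m := by rw [hj0def]; exact Nat.findGreatest_le m
  have hj0lt : j0 < m := by
    rcases eq_or_lt_of_le hj0m with he | h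
    · exfalso; rw [he, hfm] at hj0le; omega
    · exact h
  have hgt : a' < f (j0 + 1) := by
    have h := @Nat.findGreatest_is_greatest (j0 + 1) (fun j => f j ≤ a') inferInstance m
      (by rw [← hj0def]; omega) (by omega)
    omega
  set g : ℕ → ℕ := fun j => if j = 0 then a' else f (j + j0) with hgdef
  set m' := m - j0 with hm'def
  have hg0 : g 0 = a' := if_pos rfl
  have hgm' : g m' = b + 1 := by
    simp only [hgdef]
    rw [if_neg (by omega : m' ≠ 0), hm'def, Nat.sub_add_cancel hj0m, hfm]
  have hgstep : ∀ j, j < m' → g j < g (j + 1) := by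
    intro j hj
    rcases Nat.eq_zero_or_pos j with rfl | hp
    · simp only [hgdef, if_pos rfl, if_neg one_ne_zero]
      calc a' < f (j0 + 1) := hgt
        _ = f (1 + j0) := by rw [Nat.add_comm]
    · simp only [hgdef, if_neg (by omega : j ≠ 0), if_neg (by omega : j + 1 ≠ 0)]
      have e : j + 1 + j0 = (j + j0) + 1 := by omega
      rw [e]
      exact hstep (j + j0) (by omega)
  have hfj1n : f (j0 + 1) ≤ b + 1 := hfm ▸ mono_aux hstep (by omega) le_rfl
  have hterm : ∀ j : Fin m', Theta1 P (g j.val) (g (j.val + 1) - 1) ≤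
      ⨆ j : Fin m, Theta1 P (f j.val) (f (j.val + 1) - 1) := by
    rintro ⟨j, hj⟩
    rcases Nat.eq_zero_or_pos j with rfl | hp
    · show Theta1 P (g 0) (g (0 + 1) - 1) ≤ _
      have e2 : g (0 + 1) = f (1 + j0) := if_neg one_ne_zero
      rw [hg0, e2, Nat.add_comm 1 j0]
      refine le_trans (Theta1_mono P hj0le (by omega) le_rfl (by omega)) ?_
      exact le_ciSup (f := fun j : Fin m => Theta1 P (f j.val) (f (j.val + 1) - 1)) (Set.finite_range _).bddAbove (⟨j0, hj0lt⟩ : Fin m)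
    · show Theta1 P (g j) (g (j + 1) - 1) ≤ _
      have e1 : g j = f (j + j0) := if_neg (by omega)
      have e2 : g (j + 1) = f (j + 1 + j0) := if_neg (by omega)
      have e3 : j + 1 + j0 = (j + j0) + 1 := by omega
      rw [e1, e2, e3]
      exact le_ciSup (f := fun j : Fin m => Theta1 P (f j.val) (f (j.val + 1) - 1)) (Set.finite_range _).bddAbove (⟨j + j0, by omega⟩ : Fin m)
  refine le_trans (ThetaK_le_of_mem P hb ⟨m', g, by omega, by omega, hg0, hgm', hgstep, rfl⟩) ?_
  haveI : Nonempty (Fin m') := ⟨⟨0, by omega⟩⟩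
  exact ciSup_le hterm

lemma ThetaK_le_max_of_mem (P : DPath) {k k' a s b : ℕ} {V : ℝ} (hk : k' + 1 ≤ k)
    (has : a ≤ s) (hsb : s < b) (hb : b ≤ P.n) (hV : V ∈ PartVals P k' (s + 1) b) :
    ThetaK P k a b ≤ max (Theta1 P a s) V := by
  obtain ⟨m, f, hm, hmk, hf0, hfm, hstep, rfl⟩ := hV
  haveI : Nonempty (Fin m) := ⟨⟨0, hm⟩⟩
  set g : ℕ → ℕ := fun j => if j = 0 then a else f (j - 1) with hgdef
  have hg0 : g 0 = a := if_pos rfl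
  have hgm : g (m + 1) = b + 1 := by
    simp only [hgdef]
    rw [if_neg (by omega : m + 1 ≠ 0)]
    simpa using hfm
  have hgstep : ∀ j, j < m + 1 → g j < g (j + 1) := by
    intro j hj
    rcases Nat.eq_zero_or_pos j with rfl | hp
    · simp only [hgdef, if_pos rfl, if_neg one_ne_zero]
      show a < f (1 - 1)
      norm_num [hf0]
      omega
    · simp only [hgdef, if_neg (by omega : j ≠ 0), if_neg (by omega : j + 1 ≠ 0)]
      have e : j + 1 - 1 = (j - 1) + 1 := by omega
      rw [e]
      exact hstep (j - 1) (by omega)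
  refine le_trans (ThetaK_le_of_mem P hb
    ⟨m + 1, g, by omega, by omega, hg0, hgm, hgstep, rfl⟩) ?_
  apply ciSup_le
  rintro ⟨j, hj⟩
  rcases Nat.eq_zero_or_pos j with rfl | hp
  · show Theta1 P (g 0) (g (0 + 1) - 1) ≤ _
    have e2 : g (0 + 1) = f 0 := if_neg one_ne_zero
    rw [hg0, e2, hf0]
    have : s + 1 - 1 = s := by omega
    rw [this]
    exact le_max_left _ _
  · show Theta1 P (g j) (g (j + 1) - 1) ≤ _
    have e1 : g j = f (j - 1) := if_neg (by omega)
    have e2 : g (j + 1) = f (j + 1 - 1) := if_neg (by omega)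
    have e3 : j + 1 - 1 = (j - 1) + 1 := by omega
    rw [e1, e2, e3]
    refine le_trans ?_ (le_max_right _ _)
    exact le_ciSup (f := fun j : Fin m => Theta1 P (f j.val) (f (j.val + 1) - 1)) (Set.finite_range _).bddAbove (⟨j - 1, by omega⟩ : Fin m)

lemma ThetaK_prepend (P : DPath) {k k' a s b : ℕ} (hk' : 1 ≤ k') (hk : k' + 1 ≤ k)
    (has : a ≤ s) (hsb : s < b) (hb : b ≤ P.n) :
    ThetaK P k a b ≤ max (Theta1 P a s) (ThetaK P k' (s + 1) b) := by
  apply le_of_forall_pos_le_add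
  intro ε hε
  have hne : (PartVals P k' (s + 1) b).Nonempty := ⟨_, Theta1_mem_PSet P hk' hsb⟩
  obtain ⟨V, hV, hVlt⟩ := Real.lt_sInf_add_pos hne hε
  rw [← ThetaK_def] at hVlt
  calc ThetaK P k a b ≤ max (Theta1 P a s) V := ThetaK_le_max_of_mem P hk has hsb hb hV
    _ ≤ max (Theta1 P a s) (ThetaK P k' (s + 1) b) + ε := by
        apply max_le
        · linarith [le_max_left (Theta1 P a s) (ThetaK P k' (s + 1) b)]
        · linarith [le_max_right (Theta1 P a s) (ThetaK P k' (s + 1) b)]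

lemma Theta1_ge_gap (P : DPath) {a p q b : ℕ} (hap : a ≤ p) (hpq : p < q) (hqb : q ≤ b)
    (hb : b ≤ P.n) (hwp : 1 ≤ P.w p) (hwq : 1 ≤ P.w q) :
    (P.x q - P.x p) * P.τ / 2 ≤ Theta1 P a b := by
  have hab : a ≤ b := by omega
  apply le_Theta1 P hab hb
  rintro y ⟨hy1, hy2⟩
  have hxpq : P.x p < P.x q := P.x_strictMono hpq (by omega)
  by_cases hmid : (P.x p + P.x q) / 2 ≤ y
  · have hpy : P.x p < y := by linarith
    have hW : 1 ≤ P.W a p := hwp.trans (P.w_le_W hap le_rfl)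
    have hcl : 1 ≤ P.cL b y p := P.cL_pos p hb ⟨p + 1, le_rfl, by omega, hpy⟩
    have hceil := one_le_ceil' hW hcl
    have hterm := le_ThetaL P hap (by omega : p ≤ b) hpy hW
    have h1 : (P.x q - P.x p) * P.τ / 2 ≤ (y - P.x p) * P.τ := by
      have h2 : (P.x q - P.x p) / 2 ≤ y - P.x p := by linarith
      calc (P.x q - P.x p) * P.τ / 2 = ((P.x q - P.x p) / 2) * P.τ := by ring
        _ ≤ (y - P.x p) * P.τ := mul_le_mul_of_nonneg_right h2 P.hτ.le
    refine le_trans ?_ (hterm.trans (le_max_left _ _))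
    linarith
  · have hqy : y < P.x q := by linarith
    have hW : 1 ≤ P.W q b := hwq.trans (P.w_le_W le_rfl hqb)
    have hcr : 1 ≤ P.cR a y q := P.cR_pos q (by omega) ⟨q, by omega, le_rfl, hqy⟩
    have hceil := one_le_ceil' hW hcr
    have hterm := le_ThetaR P (by omega : a ≤ q) hqb hqy hW
    have h1 : (P.x q - P.x p) * P.τ / 2 ≤ (P.x q - y) * P.τ := by
      have h2 : (P.x q - P.x p) / 2 ≤ P.x q - y := by linarith
      calc (P.x q - P.x p) * P.τ / 2 = ((P.x q - P.x p) / 2) * P.τ := by ring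
        _ ≤ (P.x q - y) * P.τ := mul_le_mul_of_nonneg_right h2 P.hτ.le
    refine le_trans ?_ (hterm.trans (le_max_right _ _))
    linarith

lemma exists_two_in_interval (P : DPath) {m : ℕ} {f : ℕ → ℕ} (hm : 1 ≤ m)
    (hf0 : f 0 = 1) (hfm : f m = P.n + 1) (hstep : ∀ j, j < m → f j < f (j + 1))
    (hcard : m < ((Finset.Icc 1 P.n).filter (fun i => 1 ≤ P.w i)).card) :
    ∃ (j p q : ℕ), j < m ∧ f j ≤ p ∧ p < q ∧ q ≤ f (j + 1) - 1 ∧ q ≤ P.n ∧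
      1 ≤ P.w p ∧ 1 ≤ P.w q := by
  have hidx : ∀ v ∈ (Finset.Icc 1 P.n).filter (fun i => 1 ≤ P.w i),
      Nat.findGreatest (fun j => f j ≤ v) m ∈ Finset.range m ∧
      f (Nat.findGreatest (fun j => f j ≤ v) m) ≤ v ∧
      v < f (Nat.findGreatest (fun j => f j ≤ v) m + 1) := by
    intro v hv
    rw [Finset.mem_filter, Finset.mem_Icc] at hv
    have hle : f (Nat.findGreatest (fun j => f j ≤ v) m) ≤ v :=
      @Nat.findGreatest_spec 0 (fun j => f j ≤ v) inferInstance m (Nat.zero_le m)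
        (by show f 0 ≤ v; omega)
    have hj0m : Nat.findGreatest (fun j => f j ≤ v) m ≤ m := Nat.findGreatest_le m
    have hlt : Nat.findGreatest (fun j => f j ≤ v) m < m := by
      rcases eq_or_lt_of_le hj0m with he | h
      · exfalso; rw [he, hfm] at hle; omega
      · exact h
    have hgt : v < f (Nat.findGreatest (fun j => f j ≤ v) m + 1) := by
      have h := @Nat.findGreatest_is_greatest (Nat.findGreatest (fun j => f j ≤ v) m + 1)
        (fun j => f j ≤ v) inferInstance m (by omega) (by omega)
      omega
    exact ⟨Finset.mem_range.mpr hlt, hle, hgt⟩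
  obtain ⟨p, hp, q, hq, hne, heq⟩ := Finset.exists_ne_map_eq_of_card_lt_of_maps_to
    (t := Finset.range m) (by rw [Finset.card_range]; omega) (fun v hv => (hidx v hv).1)
  have hpI := hp; have hqI := hq
  rw [Finset.mem_filter, Finset.mem_Icc] at hpI hqI
  rcases lt_or_gt_of_ne hne with h | h
  · refine ⟨Nat.findGreatest (fun j => f j ≤ p) m, p, q,
      Finset.mem_range.mp (hidx p hp).1, (hidx p hp).2.1, h, ?_, hqI.1.2, hpI.2, hqI.2⟩
    have h2 := (hidx q hq).2.2
    rw [← heq] at h2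
    omega
  · refine ⟨Nat.findGreatest (fun j => f j ≤ q) m, q, p,
      Finset.mem_range.mp (hidx q hq).1, (hidx q hq).2.1, h, ?_, hpI.1.2, hqI.2, hpI.2⟩
    have h2 := (hidx p hp).2.2
    rw [heq] at h2
    omega

end Lemmas

/-- if strictly more than `k` vertices carry positive weight,
then `S = { i < n : Θ¹(P_{0,i}) < Θ^{k−1}(P_{i+1,n}) }` is nonempty (indeed
`0 ∈ S`), and for `t = max S`,
`Θᵏ(P_{0,n}) = min(Θ¹(P_{0,t+1}), Θ^{k−1}(P_{t+1,n}))`. -/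
theorem stmt16 (P : DPath) (hn : 1 ≤ P.n) (k : ℕ) (hk : 2 ≤ k)
    (hw : k < ((Finset.range (P.n + 1)).filter (fun i => 1 ≤ P.w i)).card) :
    -- 0 ∈ S (so S is nonempty)
    (Theta1 P 0 0 < ThetaK P (k - 1) 1 P.n) ∧
    -- for t = max S (so 0 ≤ t < n), the recurrence holds
    (∀ t, t < P.n → Theta1 P 0 t < ThetaK P (k - 1) (t + 1) P.n →
      (∀ i, i < P.n → Theta1 P 0 i < ThetaK P (k - 1) (i + 1) P.n → i ≤ t) →
      ThetaK P k 0 P.n =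
        min (Theta1 P 0 (t + 1)) (ThetaK P (k - 1) (t + 1) P.n)) := by
  have hk1 : 1 ≤ k - 1 := by omega
  constructor
  · -- Part 1: 0 ∈ S
    have h00 : Theta1 P 0 0 = 0 := by
      apply le_antisymm
      · refine le_trans (Theta1_le P ⟨le_rfl, le_rfl⟩) ?_
        apply max_le
        · rw [ThetaL_eq_zero P (Nat.zero_le _) le_rfl]
        · rw [ThetaR_eq_zero P (Nat.zero_le _) le_rfl]
      · exact Theta1_nonneg P le_rfl (Nat.zero_le _)
    rw [h00]
    have hne : ((Finset.Icc 1 P.n).image (fun i => P.x i - P.x (i - 1))).Nonempty :=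
      ⟨_, Finset.mem_image_of_mem _ (Finset.mem_Icc.mpr ⟨le_rfl, hn⟩)⟩
    have hdpos : 0 < Finset.min' _ hne := by
      obtain ⟨i, hi, he⟩ := Finset.mem_image.mp (Finset.min'_mem _ hne)
      rw [← he]
      rw [Finset.mem_Icc] at hi
      have := P.x_strictMono (show i - 1 < i by omega) hi.2
      linarith
    have hd_le : ∀ p q : ℕ, p < q → q ≤ P.n → Finset.min' _ hne ≤ P.x q - P.x p := by
      intro p q hpq hq
      have hmem : P.x (p + 1) - P.x (p + 1 - 1) ∈
          (Finset.Icc 1 P.n).image (fun i => P.x i - P.x (i - 1)) :=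
        Finset.mem_image_of_mem _ (Finset.mem_Icc.mpr ⟨by omega, by omega⟩)
      have h1 := Finset.min'_le _ _ hmem
      have h2 : P.x (p + 1) ≤ P.x q := P.x_mono (by omega) hq
      simp only [Nat.add_sub_cancel] at h1
      linarith
    have hcard := card_aux P k hw
    have hTK : Finset.min' _ hne * P.τ / 2 ≤ ThetaK P (k - 1) 1 P.n := by
      apply le_ThetaK P hk1 hn
      rintro V ⟨m, f, hm, hmk, hf0, hfm, hstep, rfl⟩
      obtain ⟨j, p, q, hjm, hfp, hpq, hq1, hqn, hwp, hwq⟩ :=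
        exists_two_in_interval P hm hf0 hfm hstep (by omega)
      have hfj1 : f (j + 1) ≤ P.n + 1 := hfm ▸ mono_aux hstep (by omega) le_rfl
      have hgap := Theta1_ge_gap P hfp hpq hq1 (by omega) hwp hwq
      have hdle : Finset.min' _ hne * P.τ / 2 ≤ (P.x q - P.x p) * P.τ / 2 := by
        have h3 := hd_le p q hpq hqn
        have h4 := mul_le_mul_of_nonneg_right h3 P.hτ.le
        linarith
      refine le_trans hdle (hgap.trans ?_)
      exact le_ciSup (f := fun j : Fin m => Theta1 P (f j.val) (f (j.val + 1) - 1))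
        (Set.finite_range _).bddAbove (⟨j, hjm⟩ : Fin m)
    have hpos : 0 < Finset.min' _ hne * P.τ / 2 := by
      have := P.hτ
      positivity
    linarith
  · -- Part 2: the recurrence
    intro t ht h1 hmax
    apply le_antisymm
    · apply le_min
      · -- ≤ Theta1 P 0 (t+1)
        rcases eq_or_lt_of_le (show t + 1 ≤ P.n by omega) with he | hlt
        · have h2 := ThetaK_le_Theta1 P (show (1:ℕ) ≤ k by omega) (Nat.zero_le P.n) le_rfl
          rw [he]
          exact h2
        · have hprep := ThetaK_prepend P (k := k) (k' := k - 1) (s := t + 1) (b := P.n) hk1 (by omega) (Nat.zero_le _) hlt le_rfl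
          have hle : ThetaK P (k - 1) (t + 1 + 1) P.n ≤ Theta1 P 0 (t + 1) := by
            by_contra hcon
            have := hmax (t + 1) hlt (not_le.mp hcon)
            omega
          rw [max_eq_left hle] at hprep
          exact hprep
      · -- ≤ ThetaK P (k-1) (t+1) P.n
        rw [ThetaK_def P (k - 1) (t + 1) P.n]
        apply le_csInf ⟨_, Theta1_mem_PSet P hk1 (by omega : t + 1 ≤ P.n)⟩
        intro V hV
        have hVB : ThetaK P (k - 1) (t + 1) P.n ≤ V := ThetaK_le_of_mem P le_rfl hV
        have h2 := ThetaK_le_max_of_mem P (k := k) (k' := k - 1) (by omega : k - 1 + 1 ≤ k)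
          (Nat.zero_le t) (by omega : t < P.n) le_rfl hV
        rw [max_eq_right ((h1.trans_le hVB).le)] at h2
        exact h2
    · -- lower bound
      rw [ThetaK_def P k 0 P.n]
      apply le_csInf ⟨_, Theta1_mem_PSet P (show (1:ℕ) ≤ k by omega) (Nat.zero_le _)⟩
      rintro V ⟨m, f, hm, hmk, hf0, hfm, hstep, rfl⟩
      haveI : Nonempty (Fin m) := ⟨⟨0, hm⟩⟩
      have hf1n : f 1 ≤ P.n + 1 := hfm ▸ mono_aux hstep hm le_rfl
      by_cases hcase : t + 2 ≤ f 1
      · refine le_trans (min_le_left _ _) ?_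
        have hmono : Theta1 P 0 (t + 1) ≤ Theta1 P 0 (f 1 - 1) :=
          Theta1_mono P le_rfl (Nat.zero_le _) (by omega) (by omega)
        refine hmono.trans ?_
        have h3 := le_ciSup (f := fun j : Fin m => Theta1 P (f j.val) (f (j.val + 1) - 1))
          (Set.finite_range _).bddAbove (⟨0, hm⟩ : Fin m)
        rw [hf0] at h3
        exact h3
      · have hf1 : f 1 ≤ t + 1 := by omega
        have hm2 : 2 ≤ m := by
          by_contra hcon
          have hm1 : m = 1 := by omega
          rw [hm1] at hfm
          omega
        have htail : (⨆ j : Fin (m - 1), Theta1 P (f (j.val + 1)) (f (j.val + 1 + 1) - 1)) ∈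
            PartVals P (k - 1) (f 1) P.n := by
          refine ⟨m - 1, fun j => f (j + 1), by omega, by omega, rfl, ?_, ?_, rfl⟩
          · show f (m - 1 + 1) = P.n + 1
            rw [show m - 1 + 1 = m by omega, hfm]
          · intro j hj
            exact hstep (j + 1) (by omega)
        have hVtail := ThetaK_le_of_mem P le_rfl htail
        have htailV : (⨆ j : Fin (m - 1), Theta1 P (f (j.val + 1)) (f (j.val + 1 + 1) - 1)) ≤
            ⨆ j : Fin m, Theta1 P (f j.val) (f (j.val + 1) - 1) := by
          haveI : Nonempty (Fin (m - 1)) := ⟨⟨0, by omega⟩⟩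
          apply ciSup_le
          rintro ⟨j, hj⟩
          exact le_ciSup (f := fun j : Fin m => Theta1 P (f j.val) (f (j.val + 1) - 1))
            (Set.finite_range _).bddAbove (⟨j + 1, by omega⟩ : Fin m)
        have hmono := ThetaK_mono_left P (k := k - 1) hk1 hf1 (by omega : t + 1 ≤ P.n) le_rfl
        exact le_trans (min_le_right _ _) (hmono.trans (hVtail.trans htailV))
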